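/- The group algebra 𝔽₂D₈ of the dihedral group D₈ of order 8 over the field with two elements is a reflexive ring: for all a, b ∈ 𝔽₂D₈, if a*x*b = 0 for all x ∈ 𝔽₂D₈, then b*x*a = 0 for all x ∈ 𝔽₂D₈. -/

import Mathlib

private lemma trace_comm {k : Type*} [CommSemiring k] {G : Type*} [Group G]
    (u v : MonoidAlgebra k G) : (u * v).coeff 1 = (v * u).coeff 1 := by
  induction u using MonoidAlgebra.induction_linear with
  | zero => simp
  | add f g hf hg =>
      rw [add_mul, mul_add]; rw [MonoidAlgebra.coeff_add, MonoidAlgebra.coeff_add, Finsupp.add_apply, Finsupp.add_apply]; rw [hf, hg]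
  | single x r =>
      rw [MonoidAlgebra.coeff_single_mul_apply, MonoidAlgebra.coeff_mul_single_apply, one_mul, mul_one,
        mul_comm]

theorem f2d8_reflexive :
    ∀ a b : MonoidAlgebra (ZMod 2) (DihedralGroup 4),
      (∀ x : MonoidAlgebra (ZMod 2) (DihedralGroup 4), a * x * b = 0) →
      (∀ x : MonoidAlgebra (ZMod 2) (DihedralGroup 4), b * x * a = 0) := by
  intro a b h x
  ext g
  set s : MonoidAlgebra (ZMod 2) (DihedralGroup 4) := MonoidAlgebra.single g⁻¹ 1 with hs
  have key : (b * x * a * s).coeff 1 = (b * x * a).coeff g := by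
    rw [hs, MonoidAlgebra.coeff_mul_single_apply, one_mul, inv_inv, mul_one]
  rw [MonoidAlgebra.coeff_zero, Finsupp.coe_zero, Pi.zero_apply, ← key]
  have h1 : b * x * a * s = b * (x * (a * s)) := by
    rw [mul_assoc, mul_assoc]
  rw [h1, trace_comm]
  have h3 : x * (a * s) * b = x * (a * s * b) := by rw [mul_assoc]
  rw [h3, h s, mul_zero, MonoidAlgebra.coeff_zero, Finsupp.coe_zero, Pi.zero_apply]
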